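/- The tilted weight always exceeds one half: if α* > 1/2 then for every θ ∈ ℝ, G(θ, 1/2) < α*; consequently, since G(θ, ·) is strictly increasing in α, any a ∈ (0,1] with G(θ, a) = α* satisfies a > 1/2. -/

import Mathlib

open MeasureTheory

/-- The standard Gaussian density. -/
noncomputable def stdGauss (y : ℝ) : ℝ :=
  (Real.sqrt (2 * Real.pi))⁻¹ * Real.exp (-y ^ 2 / 2)

/-- Density of the two-component mixture `α*·N(θ*,1) + (1-α*)·N(-θ*,1)`. -/
noncomputable def mixDen (θs αs y : ℝ) : ℝ :=
  αs * stdGauss (y - θs) + (1 - αs) * stdGauss (y + θs)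

/-- The EM/Sinkhorn-EM map `F(θ, α)`. -/
noncomputable def Fmap (θs αs θ α : ℝ) : ℝ :=
  ∫ y, y * (α * Real.exp (θ * y) - (1 - α) * Real.exp (-(θ * y))) /
      (α * Real.exp (θ * y) + (1 - α) * Real.exp (-(θ * y))) * mixDen θs αs y

/-- The tilting equation map `G(θ, α)`. -/
noncomputable def Gmap (θs αs θ α : ℝ) : ℝ :=
  ∫ y, α * Real.exp (θ * y) /
      (α * Real.exp (θ * y) + (1 - α) * Real.exp (-(θ * y))) * mixDen θs αs y

/-- The (normalized) `θ`-derivative of the tilting equation, `G_θ(θ, α)`. -/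
noncomputable def Gtheta (θs αs θ α : ℝ) : ℝ :=
  ∫ y, y / (α * Real.exp (θ * y) + (1 - α) * Real.exp (-(θ * y))) ^ 2 * mixDen θs αs y

/-! Auxiliary lemmas. -/

lemma stdGauss_pos (y : ℝ) : 0 < stdGauss y := by
  unfold stdGauss
  positivity

lemma stdGauss_continuous : Continuous stdGauss := by
  unfold stdGauss; fun_prop

lemma stdGauss_even (y : ℝ) : stdGauss (-y) = stdGauss y := by
  unfold stdGauss; ring_nf

lemma stdGauss_integrable : Integrable stdGauss := by
  have h : Integrable (fun y : ℝ => Real.exp (-(1/2) * y ^ 2)) :=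
    integrable_exp_neg_mul_sq (by norm_num)
  have h2 := h.const_mul ((Real.sqrt (2 * Real.pi))⁻¹)
  have : stdGauss = fun y : ℝ => (Real.sqrt (2 * Real.pi))⁻¹ * Real.exp (-(1/2) * y ^ 2) := by
    funext y; unfold stdGauss; congr 1; ring
  rw [this]; exact h2

lemma integral_stdGauss : ∫ y, stdGauss y = 1 := by
  have : stdGauss = fun y : ℝ => (Real.sqrt (2 * Real.pi))⁻¹ * Real.exp (-(1/2) * y ^ 2) := by
    funext y; unfold stdGauss; congr 1; ring
  rw [this, integral_const_mul, integral_gaussian]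
  have h2 : Real.pi / (1/2) = 2 * Real.pi := by ring
  rw [h2, inv_mul_cancel₀]
  exact Real.sqrt_ne_zero'.mpr (by positivity)

lemma mixDen_integrable (θs αs : ℝ) : Integrable (mixDen θs αs) := by
  unfold mixDen
  exact ((stdGauss_integrable.comp_sub_right θs).const_mul αs).add
    ((stdGauss_integrable.comp_add_right θs).const_mul (1 - αs))

lemma mixDen_continuous (θs αs : ℝ) : Continuous (mixDen θs αs) := by
  unfold mixDen
  exact (continuous_const.mul (stdGauss_continuous.comp (continuous_id.sub continuous_const))).add
    (continuous_const.mul (stdGauss_continuous.comp (continuous_id.add continuous_const)))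

lemma integrable_bdd_mul_gauss {w : ℝ → ℝ} (hw : Continuous w) {C : ℝ}
    (hC : ∀ y, |w y| ≤ C) {g : ℝ → ℝ} (hg : Integrable g) :
    Integrable (fun y => w y * g y) :=
  hg.bdd_mul hw.aestronglyMeasurable (Filter.Eventually.of_forall fun y => hC y)

/-- denominator positivity -/
lemma denom_pos {a : ℝ} (ha : 0 < a) (ha1 : a ≤ 1) (θ y : ℝ) :
    0 < a * Real.exp (θ * y) + (1 - a) * Real.exp (-(θ * y)) := by
  have h1 : 0 < a * Real.exp (θ * y) := by positivity
  have h2 : 0 ≤ (1 - a) * Real.exp (-(θ * y)) := by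
    have : 0 ≤ 1 - a := by linarith
    positivity
  linarith

lemma frac_nonneg {a : ℝ} (ha : 0 < a) (ha1 : a ≤ 1) (θ y : ℝ) :
    0 ≤ a * Real.exp (θ * y) /
      (a * Real.exp (θ * y) + (1 - a) * Real.exp (-(θ * y))) :=
  div_nonneg (by positivity) (denom_pos ha ha1 θ y).le

lemma frac_le_one {a : ℝ} (ha : 0 < a) (ha1 : a ≤ 1) (θ y : ℝ) :
    a * Real.exp (θ * y) /
      (a * Real.exp (θ * y) + (1 - a) * Real.exp (-(θ * y))) ≤ 1 := by
  rw [div_le_one (denom_pos ha ha1 θ y)]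
  have : 0 ≤ (1 - a) * Real.exp (-(θ * y)) := by
    have : 0 ≤ 1 - a := by linarith
    positivity
  linarith

lemma frac_continuous {a : ℝ} (ha : 0 < a) (ha1 : a ≤ 1) (θ : ℝ) :
    Continuous (fun y => a * Real.exp (θ * y) /
      (a * Real.exp (θ * y) + (1 - a) * Real.exp (-(θ * y)))) := by
  apply Continuous.div (by fun_prop) (by fun_prop)
  exact fun y => (denom_pos ha ha1 θ y).ne'

lemma Gmap_integrand_integrable (θs αs θ : ℝ) {a : ℝ} (ha : 0 < a) (ha1 : a ≤ 1) :
    Integrable (fun y => a * Real.exp (θ * y) /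
      (a * Real.exp (θ * y) + (1 - a) * Real.exp (-(θ * y))) * mixDen θs αs y) :=
  integrable_bdd_mul_gauss (frac_continuous ha ha1 θ) (C := 1)
    (fun y => by rw [abs_of_nonneg (frac_nonneg ha ha1 θ y)]; exact frac_le_one ha ha1 θ y)
    (mixDen_integrable θs αs)

/-- The sigmoid weight. -/
noncomputable def wt (θ y : ℝ) : ℝ := Real.exp (θ * y) / (Real.exp (θ * y) + Real.exp (-(θ * y)))

lemma wt_denom_pos (θ y : ℝ) : 0 < Real.exp (θ * y) + Real.exp (-(θ * y)) := by positivity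

lemma wt_pos (θ y : ℝ) : 0 < wt θ y := div_pos (Real.exp_pos _) (wt_denom_pos θ y)

lemma wt_lt_one (θ y : ℝ) : wt θ y < 1 := by
  rw [wt, div_lt_one (wt_denom_pos θ y)]
  have := Real.exp_pos (-(θ * y)); linarith

lemma wt_continuous (θ : ℝ) : Continuous (wt θ) := by
  apply Continuous.div (by fun_prop) (by fun_prop)
  exact fun y => (wt_denom_pos θ y).ne'

lemma wt_neg (θ y : ℝ) : wt θ (-y) = 1 - wt θ y := by
  have h := wt_denom_pos θ y
  rw [wt, wt]
  rw [show θ * -y = -(θ * y) by ring, neg_neg]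
  field_simp
  ring

lemma wt_abs_le (θ y : ℝ) : |wt θ y| ≤ 1 := by
  rw [abs_of_nonneg (wt_pos θ y).le]; exact (wt_lt_one θ y).le

/-- the tilted weight always exceeds one half: for every `θ`,
`G(θ, 1/2) < α*`; consequently any `a ∈ (0, 1]` with `G(θ, a) = α*` satisfies `a > 1/2`. -/
theorem tilted_weight_gt_half
    (θs αs : ℝ) (hθs : 0 < θs) (hαs : 1 / 2 < αs) (hαs1 : αs < 1) :
    (∀ θ : ℝ, Gmap θs αs θ (1 / 2) < αs) ∧
    (∀ θ a : ℝ, 0 < a → a ≤ 1 → Gmap θs αs θ a = αs → 1 / 2 < a) := by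
  have key : ∀ θ : ℝ, Gmap θs αs θ (1 / 2) < αs := by
    intro θ
    -- rewrite Gmap at α = 1/2 as ∫ wt θ y * mixDen
    have hG : Gmap θs αs θ (1 / 2) = ∫ y, wt θ y * mixDen θs αs y := by
      unfold Gmap
      congr 1; funext y
      have h1 : (1/2 : ℝ) * Real.exp (θ * y) + (1 - 1/2) * Real.exp (-(θ * y))
          = (1/2) * (Real.exp (θ * y) + Real.exp (-(θ * y))) := by ring
      rw [h1, show (1/2 : ℝ) * Real.exp (θ * y) = (1/2) * Real.exp (θ * y) from rfl,
        mul_div_mul_left _ _ (by norm_num : (1/2 : ℝ) ≠ 0), wt]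
    -- integrability helpers
    have hint_wt : Integrable (fun y => wt θ y * stdGauss (y - θs)) :=
      integrable_bdd_mul_gauss (wt_continuous θ) (wt_abs_le θ)
        (stdGauss_integrable.comp_sub_right θs)
    have hint_wt' : Integrable (fun y => wt θ y * stdGauss (y + θs)) :=
      integrable_bdd_mul_gauss (wt_continuous θ) (wt_abs_le θ)
        (stdGauss_integrable.comp_add_right θs)
    have hint_wm : Integrable (fun y => wt θ y * mixDen θs αs y) :=
      integrable_bdd_mul_gauss (wt_continuous θ) (wt_abs_le θ) (mixDen_integrable θs αs)
    have habs2 : ∀ y, |αs - wt θ y| ≤ |αs| + 1 := fun y => by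
      have := wt_abs_le θ y
      calc |αs - wt θ y| ≤ |αs| + |wt θ y| := abs_sub _ _
        _ ≤ |αs| + 1 := by linarith
    have hint_p : Integrable (fun y => (αs - wt θ y) * stdGauss (y - θs)) :=
      integrable_bdd_mul_gauss (continuous_const.sub (wt_continuous θ)) habs2
        (stdGauss_integrable.comp_sub_right θs)
    have hint_m : Integrable (fun y => (αs - wt θ y) * stdGauss (y + θs)) :=
      integrable_bdd_mul_gauss (continuous_const.sub (wt_continuous θ)) habs2
        (stdGauss_integrable.comp_add_right θs)
    have hint_q : Integrable (fun y => (αs - 1 + wt θ y) * stdGauss (y - θs)) :=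
      integrable_bdd_mul_gauss (continuous_const.add (wt_continuous θ))
        (C := |αs - 1| + 1) (fun y => by
          have := wt_abs_le θ y
          calc |αs - 1 + wt θ y| ≤ |αs - 1| + |wt θ y| := abs_add_le _ _
            _ ≤ |αs - 1| + 1 := by linarith)
        (stdGauss_integrable.comp_sub_right θs)
    have hint_ow : Integrable (fun y => (1 - wt θ y) * stdGauss (y - θs)) :=
      integrable_bdd_mul_gauss (continuous_const.sub (wt_continuous θ))
        (C := 2) (fun y => by
          have := wt_abs_le θ y
          calc |1 - wt θ y| ≤ |(1:ℝ)| + |wt θ y| := abs_sub _ _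
            _ ≤ 2 := by rw [abs_one]; linarith)
        (stdGauss_integrable.comp_sub_right θs)
    -- the symmetry identity
    have hsym : ∫ y, (αs - wt θ y) * stdGauss (y + θs)
        = ∫ y, (αs - 1 + wt θ y) * stdGauss (y - θs) := by
      rw [← integral_neg_eq_self (fun y => (αs - wt θ y) * stdGauss (y + θs)) volume]
      congr 1; funext y
      rw [wt_neg, show -y + θs = -(y - θs) by ring, stdGauss_even]
      ring_nf
    -- positivity of ∫ (1 - wt) φ₊
    have hpos : 0 < ∫ y, (1 - wt θ y) * stdGauss (y - θs) := by
      rw [integral_pos_iff_support_of_nonneg]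
      · have : Function.support (fun y => (1 - wt θ y) * stdGauss (y - θs)) = Set.univ := by
          apply Set.eq_univ_of_forall
          intro y
          have h1 : 0 < 1 - wt θ y := by have := wt_lt_one θ y; linarith
          exact (mul_pos h1 (stdGauss_pos _)).ne'
        rw [this]
        simpa using (NeZero.ne (volume : Measure ℝ))
      · intro y
        have h1 : 0 < 1 - wt θ y := by have := wt_lt_one θ y; linarith
        exact (mul_pos h1 (stdGauss_pos _)).le
      · exact hint_ow
    -- main computation
    have hφ : ∫ y, stdGauss (y - θs) = 1 := by
      rw [integral_sub_right_eq_self stdGauss θs]; exact integral_stdGauss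
    set A := ∫ y, wt θ y * stdGauss (y - θs) with hA
    have hsub : ∫ y, (1 - wt θ y) * stdGauss (y - θs) = 1 - A := by
      have : (fun y => (1 - wt θ y) * stdGauss (y - θs))
          = fun y => stdGauss (y - θs) - wt θ y * stdGauss (y - θs) := by
        funext y; ring
      rw [this, integral_sub (stdGauss_integrable.comp_sub_right θs) hint_wt, hφ]
    have hB : (∫ y, wt θ y * stdGauss (y + θs)) = 1 - A := by
      rw [← integral_neg_eq_self (fun y => wt θ y * stdGauss (y + θs)) volume]
      have : (fun y => wt θ (-y) * stdGauss (-y + θs))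
          = fun y => (1 - wt θ y) * stdGauss (y - θs) := by
        funext y
        rw [wt_neg, show -y + θs = -(y - θs) by ring, stdGauss_even]
      rw [this, hsub]
    have hGsplit : (∫ y, wt θ y * mixDen θs αs y)
        = αs * A + (1 - αs) * (1 - A) := by
      have : (fun y => wt θ y * mixDen θs αs y)
          = fun y => αs * (wt θ y * stdGauss (y - θs))
              + (1 - αs) * (wt θ y * stdGauss (y + θs)) := by
        funext y; unfold mixDen; ring
      rw [this, integral_add (hint_wt.const_mul αs) (hint_wt'.const_mul (1 - αs)),
        integral_const_mul, integral_const_mul, hB]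
    rw [hG, hGsplit]
    rw [hsub] at hpos
    nlinarith [hpos]
  refine ⟨key, fun θ a ha ha1 heq => ?_⟩
  by_contra h
  push_neg at h
  -- a ≤ 1/2 : Gmap a ≤ Gmap (1/2) < αs, contradiction with Gmap a = αs
  have hmono : Gmap θs αs θ a ≤ Gmap θs αs θ (1 / 2) := by
    unfold Gmap
    apply integral_mono (Gmap_integrand_integrable θs αs θ ha ha1)
      (Gmap_integrand_integrable θs αs θ (by norm_num) (by norm_num))
    intro y
    have hd1 := denom_pos ha ha1 θ y
    have hd2 := denom_pos (a := 1/2) (by norm_num) (by norm_num) θ y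
    have hmix : 0 ≤ mixDen θs αs y := by
      have h1 := stdGauss_pos (y - θs); have h2 := stdGauss_pos (y + θs)
      unfold mixDen; nlinarith
    apply mul_le_mul_of_nonneg_right _ hmix
    rw [div_le_div_iff₀ hd1 hd2]
    have hu := Real.exp_pos (θ * y)
    have hv := Real.exp_pos (-(θ * y))
    nlinarith [mul_pos hu hv, mul_pos (mul_pos hu hv) hu]
  rw [heq] at hmono
  exact absurd (lt_of_le_of_lt hmono (key θ)) (lt_irrefl _)
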